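/- There exists a strong completion of Kleene's first model K₁ that is computable in the halting problem: letting H = {e | φ_e(e) is defined}, there exist an H-computable presentation (ψ, E) of a total combinatory algebra and a map f : ℕ → ℕ that is a strong embedding of K₁ into (ψ, E), i.e. there are combinators k₁, s₁ ∈ ℕ for K₁ such that f is a weak embedding of K₁ into (ψ, E) and f k₁, f s₁ serve as the combinators k, s for (ψ, E). -/

import Mathlib

/-- Partial recursive functions relative to an oracle `O : ℕ →. ℕ`
(relativization of Mathlib's `Nat.Partrec`). -/
inductive OracleRecursiveIn (O : ℕ →. ℕ) : (ℕ →. ℕ) → Prop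
  | zero : OracleRecursiveIn O (pure 0)
  | succ : OracleRecursiveIn O ↑Nat.succ
  | left : OracleRecursiveIn O ↑fun n : ℕ => n.unpair.1
  | right : OracleRecursiveIn O ↑fun n : ℕ => n.unpair.2
  | oracle : OracleRecursiveIn O O
  | pair {f g} : OracleRecursiveIn O f → OracleRecursiveIn O g →
      OracleRecursiveIn O fun n => Nat.pair <$> f n <*> g n
  | comp {f g} : OracleRecursiveIn O f → OracleRecursiveIn O g →
      OracleRecursiveIn O fun n => g n >>= f
  | prec {f g} : OracleRecursiveIn O f → OracleRecursiveIn O g →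
      OracleRecursiveIn O (Nat.unpaired fun a n =>
        n.rec (f a) fun y IH => do let i ← IH; g (Nat.pair a (Nat.pair y i)))
  | rfind {f} : OracleRecursiveIn O f →
      OracleRecursiveIn O fun a => Nat.rfind fun n => (fun m => m = 0) <$> f (Nat.pair a n)

open scoped Classical in
/-- The characteristic function of a set `Y ⊆ ℕ`, as a partial function. -/
noncomputable def chi (Y : Set ℕ) : ℕ →. ℕ :=
  fun n => Part.some (if n ∈ Y then 1 else 0)

/-- The `e`-th partial computable function on `ℕ`. -/
def phi (e : ℕ) : ℕ →. ℕ :=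
  Nat.Partrec.Code.eval (Denumerable.ofNat Nat.Partrec.Code e)

/-- `(ψ, E)` is a `Y`-computable presentation of a total combinatory algebra:
`ψ` is total and recursive in `Y`, `E` is an equivalence relation decidable in `Y`
which is a congruence for `ψ`, and there are combinators `k`, `s`. -/
structure YPresentation (Y : Set ℕ) (ψ : ℕ → ℕ → ℕ) (E : ℕ → ℕ → Prop) : Prop where
  psi_rec : OracleRecursiveIn (chi Y) (fun n : ℕ => Part.some (ψ n.unpair.1 n.unpair.2))
  equiv : Equivalence E
  E_rec : OracleRecursiveIn (chi Y) (chi {n : ℕ | E n.unpair.1 n.unpair.2})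
  congruence : ∀ {n n' m m'}, E n n' → E m m' → E (ψ n m) (ψ n' m')
  comb : ∃ k s : ℕ, ∀ a b c : ℕ,
    E (ψ (ψ k a) b) a ∧ E (ψ (ψ (ψ s a) b) c) (ψ (ψ a c) (ψ b c))

/-- `f` is a weak embedding of Kleene's first model `K₁` into `(ψ, E)`. -/
def WeakEmb (ψ : ℕ → ℕ → ℕ) (E : ℕ → ℕ → Prop) (f : ℕ → ℕ) : Prop :=
  (∀ n m, E (f n) (f m) → n = m) ∧
  ∀ a b c : ℕ, phi a b = Part.some c → E (ψ (f a) (f b)) (f c)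

/-- Strict application for `K₁` on partial arguments. -/
def pappN (x y : Part ℕ) : Part ℕ :=
  x.bind fun a => y.bind fun b => phi a b

/-- `k₁` and `s₁` are combinators for Kleene's first model `K₁`:
for all `a, b, c`, `φ_{k₁}(a)↓`, `φ_{φ_{k₁}(a)}(b) = a`, `φ_{s₁}(a)↓`,
`φ_{φ_{s₁}(a)}(b)↓`, and `φ_{φ_{φ_{s₁}(a)}(b)}(c) ≃ φ_{φ_a(c)}(φ_b(c))`. -/
def K1Combinators (k₁ s₁ : ℕ) : Prop :=
  ∀ a b c : ℕ,
    (phi k₁ a).Dom ∧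
    pappN (phi k₁ a) (Part.some b) = Part.some a ∧
    (phi s₁ a).Dom ∧
    (pappN (phi s₁ a) (Part.some b)).Dom ∧
    pappN (pappN (phi s₁ a) (Part.some b)) (Part.some c) = pappN (phi a c) (phi b c)

/-- `f` is a strong embedding of `K₁` into `(ψ, E)`: a weak embedding such that
for some combinators `k₁, s₁` of `K₁`, the images `f k₁` and `f s₁` serve as
combinators for `(ψ, E)`. -/
def StrongEmb (ψ : ℕ → ℕ → ℕ) (E : ℕ → ℕ → Prop) (f : ℕ → ℕ) : Prop :=
  ∃ k₁ s₁ : ℕ, K1Combinators k₁ s₁ ∧ WeakEmb ψ E f ∧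
    ∀ a b c : ℕ,
      E (ψ (ψ (f k₁) a) b) a ∧
      E (ψ (ψ (ψ (f s₁) a) b) c) (ψ (ψ a c) (ψ b c))

namespace SC
open Nat.Partrec Nat.Partrec.Code Encodable Denumerable

/-! ### Binary trees coded as naturals -/

inductive T : Type
  | leaf : ℕ → T
  | node : T → T → T
deriving DecidableEq

open T

def toN : T → ℕ
  | .leaf n => 2 * n
  | .node x y => 2 * Nat.pair (toN x) (toN y) + 1

def ofN (n : ℕ) : T :=
  if _h : n % 2 = 0 then .leaf (n / 2)
  else .node (ofN ((n/2).unpair.1)) (ofN ((n/2).unpair.2))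
decreasing_by
  · exact lt_of_le_of_lt (Nat.unpair_left_le _) (Nat.div_lt_self (by omega) (by omega))
  · exact lt_of_le_of_lt (Nat.unpair_right_le _) (Nat.div_lt_self (by omega) (by omega))

theorem ofN_toN : ∀ t, ofN (toN t) = t
  | .leaf n => by rw [toN, ofN]; simp [Nat.mul_div_cancel_left _ (by norm_num : 0 < 2)]
  | .node x y => by
      rw [toN, ofN]
      have h : ¬ (2 * Nat.pair (toN x) (toN y) + 1) % 2 = 0 := by omega
      have h2 : (2 * Nat.pair (toN x) (toN y) + 1) / 2 = Nat.pair (toN x) (toN y) := by omega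
      simp [h, h2, Nat.unpair_pair, ofN_toN x, ofN_toN y]

theorem toN_ofN : ∀ n, toN (ofN n) = n := by
  intro n
  induction n using Nat.strong_induction_on with
  | _ n ih =>
    rw [ofN]
    by_cases h : n % 2 = 0
    · simp only [h, dif_pos]; rw [toN]; omega
    · simp only [h, dif_neg (by omega : ¬ n % 2 = 0)]
      have h2 : n / 2 < n := Nat.div_lt_self (by omega) (by omega)
      show toN (T.node (ofN ((n/2).unpair.1)) (ofN ((n/2).unpair.2))) = n
      rw [toN, ih _ (lt_of_le_of_lt (Nat.unpair_left_le _) h2),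
        ih _ (lt_of_le_of_lt (Nat.unpair_right_le _) h2), Nat.pair_unpair]
      omega

theorem toN_injective : Function.Injective toN := by
  intro a b h; have := congrArg ofN h; rwa [ofN_toN, ofN_toN] at this

theorem ofN_two_mul (n : ℕ) : ofN (2 * n) = .leaf n := by
  have := ofN_toN (.leaf n); rwa [toN] at this

theorem ofN_node (x y : ℕ) : ofN (2 * Nat.pair x y + 1) = .node (ofN x) (ofN y) := by
  have h1 : toN (T.node (ofN x) (ofN y)) = 2 * Nat.pair x y + 1 := by
    rw [toN, toN_ofN, toN_ofN]
  have := ofN_toN (T.node (ofN x) (ofN y)); rwa [h1] at this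

/-! ### Special codes -/

theorem phi_encode (c : Code) (n : ℕ) : phi (encode c) n = eval c n := by
  simp [phi, ofNat_encode]

theorem phi_partrec : Partrec fun p : ℕ × ℕ => phi p.1 p.2 :=
  (Partrec₂.comp eval_part ((Computable.ofNat Code).comp Computable.fst)
    Computable.snd).of_eq fun _ => rfl

/-- `kap a`: an index of the constant function `a`. -/
def kap (a : ℕ) : ℕ := encode (Code.left.curry a)

theorem phi_kap (a b : ℕ) : phi (kap a) b = Part.some a := by
  rw [kap, phi_encode, eval_curry]
  simp [eval, Seq.seq]

theorem kap_injective : Function.Injective kap := fun _ _ h =>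
  (curry_inj (encode_injective h)).2

/-- The function behind `sig`. -/
def Fsig : ℕ →. ℕ := fun n =>
  (phi n.unpair.1.unpair.1 n.unpair.2).bind fun e =>
    (phi n.unpair.1.unpair.2 n.unpair.2).bind fun g => phi e g

theorem Fsig_partrec : Nat.Partrec Fsig := by
  have hg1 : Computable (fun n : ℕ => (n.unpair.1.unpair.1, n.unpair.2)) :=
    (Computable.fst.comp (Computable.unpair.comp (Computable.fst.comp Computable.unpair))).pair
      (Computable.snd.comp Computable.unpair)
  have h1 : Partrec fun n : ℕ => phi n.unpair.1.unpair.1 n.unpair.2 :=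
    (phi_partrec.comp hg1).of_eq fun n => rfl
  have hg2 : Computable (fun p : ℕ × ℕ => (p.1.unpair.1.unpair.2, p.1.unpair.2)) :=
    (Computable.snd.comp (Computable.unpair.comp
      (Computable.fst.comp (Computable.unpair.comp Computable.fst)))).pair
      (Computable.snd.comp (Computable.unpair.comp Computable.fst))
  have hb : Partrec fun p : ℕ × ℕ => phi p.1.unpair.1.unpair.2 p.1.unpair.2 :=
    (phi_partrec.comp hg2).of_eq fun p => rfl
  have hg3 : Computable (fun p : (ℕ × ℕ) × ℕ => (p.1.2, p.2)) :=
    (Computable.snd.comp Computable.fst).pair Computable.snd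
  have hinner : Partrec fun p : (ℕ × ℕ) × ℕ => phi p.1.2 p.2 :=
    (phi_partrec.comp hg3).of_eq fun p => rfl
  have h2 : Partrec₂ fun (n e : ℕ) =>
      (phi n.unpair.1.unpair.2 n.unpair.2).bind fun g => phi e g :=
    hb.bind hinner.to₂
  exact Partrec.nat_iff.1 (h1.bind h2)

noncomputable def cSig : Code := .comp (exists_code.1 Fsig_partrec).choose Code.id

theorem cSig_eval (n : ℕ) : eval cSig n = Fsig n := by
  have h := (exists_code.1 Fsig_partrec).choose_spec
  have : eval cSig n = eval Code.id n >>= eval (exists_code.1 Fsig_partrec).choose := rfl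
  rw [this, eval_id, h]
  exact Part.bind_some n Fsig

/-- `sig a b`: an index for `c ↦ φ_a(c)·φ_b(c)`. -/
noncomputable def sig (a b : ℕ) : ℕ := encode (cSig.curry (Nat.pair a b))

theorem phi_sig (a b c : ℕ) : phi (sig a b) c = pappN (phi a c) (phi b c) := by
  rw [sig, phi_encode, eval_curry, cSig_eval]
  simp [Fsig, pappN]

theorem sig_inj {a b a' b'} (h : sig a b = sig a' b') : a = a' ∧ b = b' := by
  have := (curry_inj (encode_injective h)).2
  exact ⟨by
    have := congrArg (fun x => x.unpair.1) this; simpa using this, by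
    have := congrArg (fun x => x.unpair.2) this; simpa using this⟩


/-- a code computing `fun n => sig n.unpair.1 n.unpair.2` as a total function,
i.e. `fun n => encode (cSig.curry n)`. -/
theorem csig1fun_computable : Computable (fun n : ℕ => encode (cSig.curry n)) :=
  Computable.encode.comp (primrec₂_curry.to_comp.comp (Computable.const cSig) Computable.id)

noncomputable def cSig1 : Code :=
  .comp (exists_code.1 (Partrec.nat_iff.1 csig1fun_computable.partrec)).choose
    (Code.comp Code.id Code.id)

theorem cSig1_eval (n : ℕ) : eval cSig1 n = Part.some (encode (cSig.curry n)) := by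
  have h := (exists_code.1 (Partrec.nat_iff.1 csig1fun_computable.partrec)).choose_spec
  have h2 : eval cSig1 n = eval (Code.comp Code.id Code.id) n >>=
      eval (exists_code.1 (Partrec.nat_iff.1 csig1fun_computable.partrec)).choose := rfl
  have h3 : eval (Code.comp Code.id Code.id) n = Part.some n := by
    have : eval (Code.comp Code.id Code.id) n = eval Code.id n >>= eval Code.id := rfl
    rw [this, eval_id]; exact (Part.bind_some n _).trans (eval_id n)
  rw [h2, h3, h]; exact Part.bind_some n _

/-- `sig1 a`: an index with `φ_{sig1 a}(b) = sig a b`. -/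
noncomputable def sig1 (a : ℕ) : ℕ := encode (cSig1.curry a)

theorem phi_sig1 (a b : ℕ) : phi (sig1 a) b = Part.some (sig a b) := by
  rw [sig1, phi_encode, eval_curry, cSig1_eval, sig]

theorem sig1_injective : Function.Injective sig1 := fun _ _ h =>
  (curry_inj (encode_injective h)).2

theorem ck1fun_computable : Computable (fun n : ℕ => kap n) :=
  Computable.encode.comp (primrec₂_curry.to_comp.comp (Computable.const Code.left) Computable.id)

/-- The code for `k₁`. -/
noncomputable def cK1 : Code :=
  .comp (exists_code.1 (Partrec.nat_iff.1 ck1fun_computable.partrec)).choose Code.id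

noncomputable def k1 : ℕ := encode cK1

theorem phi_k1 (a : ℕ) : phi k1 a = Part.some (kap a) := by
  have h := (exists_code.1 (Partrec.nat_iff.1 ck1fun_computable.partrec)).choose_spec
  have h2 : eval cK1 a = eval Code.id a >>=
      eval (exists_code.1 (Partrec.nat_iff.1 ck1fun_computable.partrec)).choose := rfl
  rw [k1, phi_encode, h2, eval_id, h]; exact Part.bind_some a _

theorem cs1fun_computable : Computable (fun n : ℕ => encode (cSig1.curry n)) :=
  Computable.encode.comp (primrec₂_curry.to_comp.comp (Computable.const cSig1) Computable.id)

/-- The code for `s₁`. -/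
noncomputable def cS1 : Code :=
  .comp (exists_code.1 (Partrec.nat_iff.1 cs1fun_computable.partrec)).choose
    (Code.comp Code.id Code.id)

noncomputable def s1 : ℕ := encode cS1

theorem phi_s1 (a : ℕ) : phi s1 a = Part.some (sig1 a) := by
  have h := (exists_code.1 (Partrec.nat_iff.1 cs1fun_computable.partrec)).choose_spec
  have h2 : eval cS1 a = eval (Code.comp Code.id Code.id) a >>=
      eval (exists_code.1 (Partrec.nat_iff.1 cs1fun_computable.partrec)).choose := rfl
  have h3 : eval (Code.comp Code.id Code.id) a = Part.some a := by
    have : eval (Code.comp Code.id Code.id) a = eval Code.id a >>= eval Code.id := rfl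
    rw [this, eval_id]; exact (Part.bind_some a _).trans (eval_id a)
  rw [s1, phi_encode, h2, h3, h]; exact Part.bind_some a _

/-! ### Freshness -/

theorem const_ne_left (n : ℕ) : Code.const n ≠ Code.left := by
  cases n <;> simp [Code.const] <;> exact fun h => by cases h

theorem curry_ne_comp_id (c d : Code) (n : ℕ) : curry c n ≠ Code.comp d Code.id := by
  intro h
  rw [curry] at h
  injection h with h1 h2
  rw [Nat.Partrec.Code.id] at h2
  injection h2 with h3 h4
  exact const_ne_left n h3

theorem curry_ne_comp_idid (c d : Code) (n : ℕ) :
    curry c n ≠ Code.comp d (Code.comp Code.id Code.id) := by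
  intro h
  rw [curry] at h
  injection h with h1 h2
  cases h2

theorem kap_ne_k1 (a : ℕ) : kap a ≠ k1 := fun h =>
  curry_ne_comp_id _ _ _ (encode_injective h)

theorem sig_ne_k1 (a b : ℕ) : sig a b ≠ k1 := fun h =>
  curry_ne_comp_id _ _ _ (encode_injective h)

theorem sig1_ne_k1 (a : ℕ) : sig1 a ≠ k1 := fun h =>
  curry_ne_comp_id _ _ _ (encode_injective h)

theorem kap_ne_s1 (a : ℕ) : kap a ≠ s1 := fun h =>
  curry_ne_comp_idid _ _ _ (encode_injective h)

theorem sig_ne_s1 (a b : ℕ) : sig a b ≠ s1 := fun h =>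
  curry_ne_comp_idid _ _ _ (encode_injective h)

theorem sig1_ne_s1 (a : ℕ) : sig1 a ≠ s1 := fun h =>
  curry_ne_comp_idid _ _ _ (encode_injective h)

theorem k1_ne_s1 : k1 ≠ s1 := by
  intro h
  have h2 := encode_injective h
  rw [cK1, cS1] at h2
  injection h2 with h3 h4
  rw [Nat.Partrec.Code.id] at h4
  cases h4

theorem cSig_ne_left : cSig ≠ Code.left := by intro h; cases h

theorem cSig1_ne_left : cSig1 ≠ Code.left := by intro h; cases h

theorem cSig_ne_cSig1 : cSig ≠ cSig1 := by
  intro h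
  rw [cSig, cSig1] at h
  injection h with h1 h2
  rw [Nat.Partrec.Code.id] at h2
  cases h2

theorem kap_ne_sig (a b c : ℕ) : kap a ≠ sig b c := by
  intro h
  exact cSig_ne_left ((curry_inj (encode_injective h)).1.symm)

theorem kap_ne_sig1 (a b : ℕ) : kap a ≠ sig1 b := by
  intro h
  exact cSig1_ne_left ((curry_inj (encode_injective h)).1.symm)

theorem sig_ne_sig1 (a b c : ℕ) : sig a b ≠ sig1 c := by
  intro h
  exact cSig_ne_cSig1 (curry_inj (encode_injective h)).1

end SC
-- Section 3: rewriting and confluence (to be appended after s1 content)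
namespace SC
open T

attribute [local instance] Classical.propDecidable

/-! ### partial inverses of the special index functions -/

noncomputable def kapInv (m : ℕ) : Option ℕ :=
  if h : ∃ a, m = kap a then some h.choose else none

theorem kapInv_eq_some {m a : ℕ} (h : kapInv m = some a) : m = kap a := by
  rw [kapInv] at h
  split at h
  · rename_i h'
    cases h; exact h'.choose_spec
  · cases h

theorem kapInv_kap (a : ℕ) : kapInv (kap a) = some a := by
  rw [kapInv, dif_pos ⟨a, rfl⟩]
  exact congrArg some (kap_injective (Exists.choose_spec (⟨a, rfl⟩ : ∃ a', kap a = kap a')).symm)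

noncomputable def sigInv (m : ℕ) : Option (ℕ × ℕ) :=
  if h : ∃ p : ℕ × ℕ, m = sig p.1 p.2 then some h.choose else none

theorem sigInv_eq_some {m : ℕ} {p : ℕ × ℕ} (h : sigInv m = some p) : m = sig p.1 p.2 := by
  rw [sigInv] at h
  split at h
  · rename_i h'
    cases h; exact h'.choose_spec
  · cases h

theorem sigInv_sig (a b : ℕ) : sigInv (sig a b) = some (a, b) := by
  rw [sigInv, dif_pos ⟨(a, b), rfl⟩]
  congr 1
  have h := Exists.choose_spec (⟨(a, b), rfl⟩ : ∃ p : ℕ × ℕ, sig a b = sig p.1 p.2)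
  obtain ⟨h1, h2⟩ := sig_inj h
  exact Prod.ext h1.symm h2.symm

noncomputable def sig1Inv (m : ℕ) : Option ℕ :=
  if h : ∃ a, m = sig1 a then some h.choose else none

theorem sig1Inv_eq_some {m a : ℕ} (h : sig1Inv m = some a) : m = sig1 a := by
  rw [sig1Inv] at h
  split at h
  · rename_i h'
    cases h; exact h'.choose_spec
  · cases h

theorem sig1Inv_sig1 (a : ℕ) : sig1Inv (sig1 a) = some a := by
  rw [sig1Inv, dif_pos ⟨a, rfl⟩]
  exact congrArg some (sig1_injective (Exists.choose_spec (⟨a, rfl⟩ : ∃ a', sig1 a = sig1 a')).symm)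

theorem kapInv_sig (a b : ℕ) : kapInv (sig a b) = none := by
  rw [kapInv, dif_neg]; rintro ⟨a', h⟩; exact kap_ne_sig a' a b h.symm

theorem kapInv_sig1 (a : ℕ) : kapInv (sig1 a) = none := by
  rw [kapInv, dif_neg]; rintro ⟨a', h⟩; exact kap_ne_sig1 a' a h.symm

theorem sigInv_kap (a : ℕ) : sigInv (kap a) = none := by
  rw [sigInv, dif_neg]; rintro ⟨p, h⟩; exact kap_ne_sig a p.1 p.2 h

theorem sigInv_sig1 (a : ℕ) : sigInv (sig1 a) = none := by
  rw [sigInv, dif_neg]; rintro ⟨p, h⟩; exact sig_ne_sig1 p.1 p.2 a h.symm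

theorem sig1Inv_kap (a : ℕ) : sig1Inv (kap a) = none := by
  rw [sig1Inv, dif_neg]; rintro ⟨a', h⟩; exact kap_ne_sig1 a a' h

theorem sig1Inv_sig (a b : ℕ) : sig1Inv (sig a b) = none := by
  rw [sig1Inv, dif_neg]; rintro ⟨a', h⟩; exact sig_ne_sig1 a b a' h

theorem kapInv_k1 : kapInv k1 = none := by
  rw [kapInv, dif_neg]; rintro ⟨a, h⟩; exact kap_ne_k1 a h.symm

theorem sigInv_k1 : sigInv k1 = none := by
  rw [sigInv, dif_neg]; rintro ⟨p, h⟩; exact sig_ne_k1 p.1 p.2 h.symm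

theorem sig1Inv_k1 : sig1Inv k1 = none := by
  rw [sig1Inv, dif_neg]; rintro ⟨a, h⟩; exact sig1_ne_k1 a h.symm

theorem kapInv_s1 : kapInv s1 = none := by
  rw [kapInv, dif_neg]; rintro ⟨a, h⟩; exact kap_ne_s1 a h.symm

theorem sigInv_s1 : sigInv s1 = none := by
  rw [sigInv, dif_neg]; rintro ⟨p, h⟩; exact sig_ne_s1 p.1 p.2 h.symm

theorem sig1Inv_s1 : sig1Inv s1 = none := by
  rw [sig1Inv, dif_neg]; rintro ⟨a, h⟩; exact sig1_ne_s1 a h.symm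

/-! ### single-step and parallel reduction -/

inductive Step : T → T → Prop
  | app {a b c : ℕ} : phi a b = Part.some c → Step (node (leaf a) (leaf b)) (leaf c)
  | kred {a : ℕ} (y) : Step (node (leaf (kap a)) y) (leaf a)
  | kred' (x y) : Step (node (node (leaf k1) x) y) x
  | sred {a b : ℕ} (z) : Step (node (leaf (sig a b)) z) (node (node (leaf a) z) (node (leaf b) z))
  | sred' {a : ℕ} (y z) : Step (node (node (leaf (sig1 a)) y) z) (node (node (leaf a) z) (node y z))
  | sred'' (x y z) : Step (node (node (node (leaf s1) x) y) z) (node (node x z) (node y z))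
  | left {x x'} (y) : Step x x' → Step (node x y) (node x' y)
  | right (x) {y y'} : Step y y' → Step (node x y) (node x y')

inductive Par : T → T → Prop
  | leaf (n) : Par (leaf n) (leaf n)
  | node {x x' y y'} : Par x x' → Par y y' → Par (node x y) (node x' y')
  | app {x y : T} {a b c : ℕ} : Par x (leaf a) → Par y (leaf b) → phi a b = Part.some c →
      Par (node x y) (leaf c)
  | kred {x y : T} {a : ℕ} : Par x (leaf (kap a)) → Par (node x y) (leaf a)
  | kred' {x y x' : T} : Par x (node (leaf k1) x') → Par (node x y) x'
  | sred {x y y' : T} {a b : ℕ} : Par x (leaf (sig a b)) → Par y y' →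
      Par (node x y) (node (node (leaf a) y') (node (leaf b) y'))
  | sred' {x y u y' : T} {a : ℕ} : Par x (node (leaf (sig1 a)) u) → Par y y' →
      Par (node x y) (node (node (leaf a) y') (node u y'))
  | sred'' {x y u v y' : T} : Par x (node (node (leaf s1) u) v) → Par y y' →
      Par (node x y) (node (node u y') (node v y'))

theorem Par.refl : ∀ t, Par t t
  | .leaf n => Par.leaf n
  | .node x y => Par.node (Par.refl x) (Par.refl y)

theorem par_of_step {t u : T} (h : Step t u) : Par t u := by
  induction h with
  | app h => exact Par.app (Par.refl _) (Par.refl _) h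
  | kred y => exact Par.kred (Par.refl _)
  | kred' x y => exact Par.kred' (Par.refl _)
  | sred z => exact Par.sred (Par.refl _) (Par.refl _)
  | sred' y z => exact Par.sred' (Par.refl _) (Par.refl _)
  | sred'' x y z => exact Par.sred'' (Par.refl _) (Par.refl _)
  | left y _ ih => exact Par.node ih (Par.refl _)
  | right x _ ih => exact Par.node (Par.refl _) ih

theorem par_leaf_inv {n : ℕ} {u : T} (h : Par (leaf n) u) : u = leaf n := by
  cases h; rfl

/-! ### the full development -/

noncomputable def ap : T → T → T
  | leaf a, v =>
    match kapInv a with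
    | some a0 => leaf a0
    | none =>
      match sigInv a with
      | some p =>
        match v with
        | leaf c =>
          if h : (phi a c).Dom then leaf ((phi a c).get h)
          else node (node (leaf p.1) (leaf c)) (node (leaf p.2) (leaf c))
        | node v1 v2 => node (node (leaf p.1) (node v1 v2)) (node (leaf p.2) (node v1 v2))
      | none =>
        match v with
        | leaf b =>
          if h : (phi a b).Dom then leaf ((phi a b).get h) else node (leaf a) (leaf b)
        | node v1 v2 => node (leaf a) (node v1 v2)
  | node (leaf w) u1, v =>
    if w = k1 then u1
    else
      match sig1Inv w with
      | some a => node (node (leaf a) v) (node u1 v)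
      | none => node (node (leaf w) u1) v
  | node (node (leaf w) u1) u2, v =>
    if w = s1 then node (node u1 v) (node u2 v)
    else node (node (node (leaf w) u1) u2) v
  | node (node (node p q) u1) u2, v => node (node (node (node p q) u1) u2) v

theorem ap_app {a b c : ℕ} (h : phi a b = Part.some c) : ap (leaf a) (leaf b) = leaf c := by
  have hdom : (phi a b).Dom := by rw [h]; trivial
  have hget : (phi a b).get hdom = c := by
    have := Part.get_eq_iff_mem (a := c) hdom
    exact this.2 (by rw [h]; exact Part.mem_some c)
  rcases hk : kapInv a with _ | a0
  · rcases hs : sigInv a with _ | p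
    · simp [ap, hk, hs, hdom, hget]
    · simp [ap, hk, hs, hdom, hget]
  · -- a = kap a0, c = a0
    have ha := kapInv_eq_some hk
    subst ha
    have : c = a0 := by
      rw [phi_kap] at h
      exact (Part.some_inj.1 h).symm
    subst this
    simp [ap, hk]

theorem ap_kap (a : ℕ) (v : T) : ap (leaf (kap a)) v = leaf a := by
  cases v <;> simp [ap, kapInv_kap]

theorem ap_sig_node {a b : ℕ} (v1 v2 : T) :
    ap (leaf (sig a b)) (node v1 v2) =
      node (node (leaf a) (node v1 v2)) (node (leaf b) (node v1 v2)) := by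
  simp [ap, kapInv_sig, sigInv_sig]

theorem ap_sig_undef {a b c : ℕ} (h : ¬ (phi (sig a b) c).Dom) :
    ap (leaf (sig a b)) (leaf c) =
      node (node (leaf a) (leaf c)) (node (leaf b) (leaf c)) := by
  simp [ap, kapInv_sig, sigInv_sig, h]

theorem ap_k1 (w v : T) : ap (node (leaf k1) w) v = w := by
  simp [ap]

theorem ap_sig1 (a : ℕ) (w v : T) :
    ap (node (leaf (sig1 a)) w) v = node (node (leaf a) v) (node w v) := by
  simp [ap, sig1_ne_k1 a, sig1Inv_sig1]

theorem ap_s1 (w1 w2 v : T) :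
    ap (node (node (leaf s1) w1) w2) v = node (node w1 v) (node w2 v) := by
  simp [ap]

end SC
namespace SC
open T

theorem pappN_eq_some {x y : Part ℕ} {d : ℕ} (h : pappN x y = Part.some d) :
    ∃ e g, x = Part.some e ∧ y = Part.some g ∧ phi e g = Part.some d := by
  have hm : d ∈ x.bind fun a => y.bind fun b => phi a b := by
    rw [show (x.bind fun a => y.bind fun b => phi a b) = pappN x y from rfl, h]
    exact Part.mem_some d
  obtain ⟨e, he, hd⟩ := Part.mem_bind_iff.1 hm
  obtain ⟨g, hg, hd'⟩ := Part.mem_bind_iff.1 hd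
  exact ⟨e, g, Part.eq_some_iff.2 he, Part.eq_some_iff.2 hg, Part.eq_some_iff.2 hd'⟩

theorem ap_par {x' y' u v : T} (hu : Par x' u) (hv : Par y' v) : Par (node x' y') (ap u v) := by
  match u, hu with
  | leaf a, hu =>
    rcases hk : kapInv a with _ | a0
    · rcases hs : sigInv a with _ | p
      · cases v with
        | leaf b =>
          by_cases hd : (phi a b).Dom
          · have heq : phi a b = Part.some ((phi a b).get hd) := (Part.some_get hd).symm
            rw [ap_app heq]
            exact Par.app hu hv heq
          · simp only [ap, hk, hs, hd]
            exact Par.node hu hv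
        | node v1 v2 =>
          simp only [ap, hk, hs]
          exact Par.node hu hv
      · have ha := sigInv_eq_some hs
        subst ha
        cases v with
        | leaf c =>
          by_cases hd : (phi (sig p.1 p.2) c).Dom
          · have heq : phi (sig p.1 p.2) c = Part.some ((phi (sig p.1 p.2) c).get hd) :=
              (Part.some_get hd).symm
            rw [ap_app heq]
            exact Par.app hu hv heq
          · rw [ap_sig_undef hd]
            exact Par.sred hu hv
        | node v1 v2 =>
          rw [ap_sig_node]
          exact Par.sred hu hv
    · have ha := kapInv_eq_some hk
      subst ha
      rw [ap_kap]
      exact Par.kred hu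
  | node (leaf w) u1, hu =>
    by_cases hw : w = k1
    · subst hw; rw [ap_k1]; exact Par.kred' hu
    · rcases hs : sig1Inv w with _ | a
      · have : ap (node (leaf w) u1) v = node (node (leaf w) u1) v := by
          simp only [ap, if_neg hw, hs]
        rw [this]
        exact Par.node hu hv
      · have ha := sig1Inv_eq_some hs
        subst ha
        rw [ap_sig1]
        exact Par.sred' hu hv
  | node (node (leaf w) u1) u2, hu =>
    by_cases hw : w = s1
    · subst hw; rw [ap_s1]; exact Par.sred'' hu hv
    · have : ap (node (node (leaf w) u1) u2) v = node (node (node (leaf w) u1) u2) v := by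
        simp only [ap, if_neg hw]
      rw [this]
      exact Par.node hu hv
  | node (node (node p q) u1) u2, hu =>
    have : ap (node (node (node p q) u1) u2) v = node (node (node (node p q) u1) u2) v := rfl
    rw [this]
    exact Par.node hu hv

theorem par_ap_sig {p q : ℕ} {A B v' v : T} (hA : Par A (leaf p)) (hB : Par B (leaf q))
    (hv : Par v' v) : Par (node (node A v') (node B v')) (ap (leaf (sig p q)) v) := by
  cases v with
  | node v1 v2 =>
    rw [ap_sig_node]
    exact Par.node (Par.node hA hv) (Par.node hB hv)
  | leaf c =>
    by_cases hd : (phi (sig p q) c).Dom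
    · obtain ⟨d0, hd0⟩ := Part.dom_iff_mem.1 hd
      have heq : phi (sig p q) c = Part.some d0 := Part.eq_some_iff.2 hd0
      rw [ap_app heq]
      have heq2 : pappN (phi p c) (phi q c) = Part.some d0 := by rw [← phi_sig]; exact heq
      obtain ⟨e, g, he, hg, hegd⟩ := pappN_eq_some heq2
      exact Par.app (Par.app hA hv he) (Par.app hB hv hg) hegd
    · rw [ap_sig_undef hd]
      exact Par.node (Par.node hA hv) (Par.node hB hv)

theorem ap_kred' {w d : T} (h : Par (node (leaf k1) w) d) (v : T) : Par w (ap d v) := by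
  cases h with
  | node h1 h2 =>
    have h1' := par_leaf_inv h1
    subst h1'
    rw [ap_k1]
    exact h2
  | app h1 h2 hphi =>
    have h1' := par_leaf_inv h1
    injection h1' with ha
    subst ha
    rw [phi_k1] at hphi
    have := Part.some_inj.1 hphi
    subst this
    rw [ap_kap]
    exact h2
  | kred h1 =>
    have h1' := par_leaf_inv h1
    injection h1' with ha
    exact absurd ha (kap_ne_k1 _)
  | kred' h1 => exact absurd (par_leaf_inv h1) (by simp)
  | sred h1 _ =>
    have h1' := par_leaf_inv h1
    injection h1' with ha
    exact absurd ha (sig_ne_k1 _ _)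
  | sred' h1 _ => exact absurd (par_leaf_inv h1) (by simp)
  | sred'' h1 _ => exact absurd (par_leaf_inv h1) (by simp)

theorem ap_sred' {a : ℕ} {w d v' v : T} (h : Par (node (leaf (sig1 a)) w) d) (hv : Par v' v) :
    Par (node (node (leaf a) v') (node w v')) (ap d v) := by
  cases h with
  | node h1 h2 =>
    have h1' := par_leaf_inv h1
    subst h1'
    rw [ap_sig1]
    exact Par.node (Par.node (Par.leaf a) hv) (Par.node h2 hv)
  | app h1 h2 hphi =>
    have h1' := par_leaf_inv h1
    injection h1' with ha
    subst ha
    rw [phi_sig1] at hphi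
    have := Part.some_inj.1 hphi
    subst this
    exact par_ap_sig (Par.leaf a) h2 hv
  | kred h1 =>
    have h1' := par_leaf_inv h1
    injection h1' with ha
    exact absurd ha (kap_ne_sig1 _ _)
  | kred' h1 => exact absurd (par_leaf_inv h1) (by simp)
  | sred h1 _ =>
    have h1' := par_leaf_inv h1
    injection h1' with ha
    exact absurd ha (sig_ne_sig1 _ _ _)
  | sred' h1 _ => exact absurd (par_leaf_inv h1) (by simp)
  | sred'' h1 _ => exact absurd (par_leaf_inv h1) (by simp)

theorem ap_sred'' {w1 w2 d v' v : T} (h : Par (node (node (leaf s1) w1) w2) d) (hv : Par v' v) :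
    Par (node (node w1 v') (node w2 v')) (ap d v) := by
  cases h with
  | node hX h2 =>
    cases hX with
    | node hs hw1 =>
      have hs' := par_leaf_inv hs
      subst hs'
      rw [ap_s1]
      exact Par.node (Par.node hw1 hv) (Par.node h2 hv)
    | app hs hb hphi =>
      have hs' := par_leaf_inv hs
      injection hs' with ha
      subst ha
      rw [phi_s1] at hphi
      have := Part.some_inj.1 hphi
      subst this
      rw [ap_sig1]
      exact Par.node (Par.node hb hv) (Par.node h2 hv)
    | kred hs =>
      have hs' := par_leaf_inv hs
      injection hs' with ha
      exact absurd ha (kap_ne_s1 _)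
    | kred' hs => exact absurd (par_leaf_inv hs) (by simp)
    | sred hs _ =>
      have hs' := par_leaf_inv hs
      injection hs' with ha
      exact absurd ha (sig_ne_s1 _ _)
    | sred' hs _ => exact absurd (par_leaf_inv hs) (by simp)
    | sred'' hs _ => exact absurd (par_leaf_inv hs) (by simp)
  | app hX hb hphi =>
    cases hX with
    | app hs hb1 hphi1 =>
      have hs' := par_leaf_inv hs
      injection hs' with ha
      subst ha
      rw [phi_s1] at hphi1
      have := Part.some_inj.1 hphi1
      subst this
      rw [phi_sig1] at hphi
      have := Part.some_inj.1 hphi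
      subst this
      exact par_ap_sig hb1 hb hv
    | kred hs =>
      have hs' := par_leaf_inv hs
      injection hs' with ha
      exact absurd ha (kap_ne_s1 _)
    | kred' hs => exact absurd (par_leaf_inv hs) (by simp)
  | kred hX =>
    cases hX with
    | app hs hb1 hphi1 =>
      have hs' := par_leaf_inv hs
      injection hs' with ha
      subst ha
      rw [phi_s1] at hphi1
      have := Part.some_inj.1 hphi1
      exact absurd this.symm (kap_ne_sig1 _ _)
    | kred hs =>
      have hs' := par_leaf_inv hs
      injection hs' with ha
      exact absurd ha (kap_ne_s1 _)
    | kred' hs => exact absurd (par_leaf_inv hs) (by simp)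
  | kred' hX =>
    cases hX with
    | node hs _ =>
      have hs' := par_leaf_inv hs
      injection hs' with ha
      exact absurd ha k1_ne_s1
    | kred' hs => exact absurd (par_leaf_inv hs) (by simp)
  | sred hX _ =>
    cases hX with
    | app hs hb1 hphi1 =>
      have hs' := par_leaf_inv hs
      injection hs' with ha
      subst ha
      rw [phi_s1] at hphi1
      have := Part.some_inj.1 hphi1
      exact absurd this.symm (sig_ne_sig1 _ _ _)
    | kred hs =>
      have hs' := par_leaf_inv hs
      injection hs' with ha
      exact absurd ha (kap_ne_s1 _)
    | kred' hs => exact absurd (par_leaf_inv hs) (by simp)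
  | sred' hX _ =>
    cases hX with
    | node hs _ =>
      have hs' := par_leaf_inv hs
      injection hs' with ha
      exact absurd ha (sig1_ne_s1 _)
    | kred' hs => exact absurd (par_leaf_inv hs) (by simp)
  | sred'' hX _ =>
    cases hX with
    | node hs _ => exact absurd (par_leaf_inv hs) (by simp)
    | kred' hs => exact absurd (par_leaf_inv hs) (by simp)
    | sred hs _ =>
      have hs' := par_leaf_inv hs
      injection hs' with ha
      exact absurd ha (sig_ne_s1 _ _)
    | sred' hs _ => exact absurd (par_leaf_inv hs) (by simp)
    | sred'' hs _ => exact absurd (par_leaf_inv hs) (by simp)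

noncomputable def dev : T → T
  | leaf n => leaf n
  | node x y => ap (dev x) (dev y)

theorem par_dev {t u : T} (h : Par t u) : Par u (dev t) := by
  induction h with
  | leaf n => exact Par.leaf n
  | node hx hy ihx ihy => exact ap_par ihx ihy
  | app hx hy hphi ihx ihy =>
    have hx' := par_leaf_inv ihx
    have hy' := par_leaf_inv ihy
    show Par _ (ap _ _)
    rw [hx', hy', ap_app hphi]
    exact Par.refl _
  | kred hx ihx =>
    have hx' := par_leaf_inv ihx
    show Par _ (ap _ _)
    rw [hx', ap_kap]
    exact Par.refl _
  | kred' hx ihx =>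
    exact ap_kred' ihx _
  | sred hx hy ihx ihy =>
    have hx' := par_leaf_inv ihx
    show Par _ (ap _ _)
    rw [hx']
    exact par_ap_sig (Par.leaf _) (Par.leaf _) ihy
  | sred' hx hy ihx ihy =>
    exact ap_sred' ihx ihy
  | sred'' hx hy ihx ihy =>
    exact ap_sred'' ihx ihy

theorem par_diamond {t u v : T} (hu : Par t u) (hv : Par t v) :
    ∃ w, Par u w ∧ Par v w :=
  ⟨dev t, par_dev hu, par_dev hv⟩

end SC
namespace SC
open T Relation

/-! ### the equivalence relation -/

def Red : T → T → Prop := Relation.ReflTransGen Par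

def TE : T → T → Prop := Relation.Join Red

theorem TE_equivalence : Equivalence TE :=
  Relation.equivalence_join_reflTransGen fun a _ _ hb hc =>
    ⟨dev a, Relation.ReflGen.single (par_dev hb), Relation.ReflTransGen.single (par_dev hc)⟩

theorem red_node {x x' y y' : T} (hx : Red x x') (hy : Red y y') :
    Red (node x y) (node x' y') := by
  have h1 : Red (node x y) (node x' y) :=
    Relation.ReflTransGen.lift (fun t => node t y) (fun _ _ h => Par.node h (Par.refl y)) _ _ hx
  have h2 : Red (node x' y) (node x' y') :=
    Relation.ReflTransGen.lift (fun t => node x' t) (fun _ _ h => Par.node (Par.refl x') h) _ _ hy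
  exact h1.trans h2

theorem te_node {x x' y y' : T} (hx : TE x x') (hy : TE y y') :
    TE (node x y) (node x' y') := by
  obtain ⟨w, hx1, hx2⟩ := hx
  obtain ⟨w', hy1, hy2⟩ := hy
  exact ⟨node w w', red_node hx1 hy1, red_node hx2 hy2⟩

theorem red_leaf_inv {n : ℕ} {u : T} (h : Red (leaf n) u) : u = leaf n := by
  induction h with
  | refl => rfl
  | tail _ h2 ih => subst ih; exact par_leaf_inv h2

theorem TE_leaf {n m : ℕ} (h : TE (leaf n) (leaf m)) : n = m := by
  obtain ⟨w, h1, h2⟩ := h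
  rw [red_leaf_inv h1] at h2
  have := red_leaf_inv h2
  injection this

theorem te_of_step {t u : T} (h : Step t u) : TE t u :=
  ⟨u, Relation.ReflTransGen.single (par_of_step h), Relation.ReflTransGen.refl⟩

/-! ### `ℕ`-level structures -/

def psiN (m n : ℕ) : ℕ := 2 * Nat.pair m n + 1

def fN (n : ℕ) : ℕ := 2 * n

def EN (m n : ℕ) : Prop := TE (ofN m) (ofN n)

theorem ofN_psiN (m n : ℕ) : ofN (psiN m n) = node (ofN m) (ofN n) := ofN_node m n

theorem ofN_fN (n : ℕ) : ofN (fN n) = leaf n := ofN_two_mul n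

theorem EN_equivalence : Equivalence EN :=
  ⟨fun _ => TE_equivalence.refl _, fun h => TE_equivalence.symm h,
    fun h h' => TE_equivalence.trans h h'⟩

theorem EN_congr {n n' m m' : ℕ} (h1 : EN n n') (h2 : EN m m') :
    EN (psiN n m) (psiN n' m') := by
  unfold EN
  rw [ofN_psiN, ofN_psiN]
  exact te_node h1 h2

theorem EN_fN {n m : ℕ} (h : EN (fN n) (fN m)) : n = m := by
  unfold EN at h
  rw [ofN_fN, ofN_fN] at h
  exact TE_leaf h

theorem EN_app {a b c : ℕ} (h : phi a b = Part.some c) : EN (psiN (fN a) (fN b)) (fN c) := by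
  unfold EN
  rw [ofN_psiN, ofN_fN, ofN_fN, ofN_fN]
  exact te_of_step (Step.app h)

theorem EN_kred' (x y : ℕ) : EN (psiN (psiN (fN k1) x) y) x := by
  unfold EN
  rw [ofN_psiN, ofN_psiN, ofN_fN]
  exact te_of_step (Step.kred' (ofN x) (ofN y))

theorem EN_sred'' (x y z : ℕ) :
    EN (psiN (psiN (psiN (fN s1) x) y) z) (psiN (psiN x z) (psiN y z)) := by
  unfold EN
  rw [ofN_psiN, ofN_psiN, ofN_psiN, ofN_fN, ofN_psiN, ofN_psiN, ofN_psiN]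
  exact te_of_step (Step.sred'' (ofN x) (ofN y) (ofN z))

/-! ### `Par` is contained in `ReflTransGen Step` -/

theorem rtgstep_node {x x' y y' : T} (hx : Relation.ReflTransGen Step x x')
    (hy : Relation.ReflTransGen Step y y') :
    Relation.ReflTransGen Step (node x y) (node x' y') := by
  have h1 : Relation.ReflTransGen Step (node x y) (node x' y) :=
    Relation.ReflTransGen.lift (fun t => node t y) (fun _ _ h => Step.left y h) _ _ hx
  have h2 : Relation.ReflTransGen Step (node x' y) (node x' y') :=
    Relation.ReflTransGen.lift (fun t => node x' t) (fun _ _ h => Step.right x' h) _ _ hy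
  exact h1.trans h2

theorem steps_of_par {t u : T} (h : Par t u) : Relation.ReflTransGen Step t u := by
  induction h with
  | leaf n => exact .refl
  | node _ _ ihx ihy => exact rtgstep_node ihx ihy
  | app _ _ hphi ihx ihy => exact (rtgstep_node ihx ihy).tail (Step.app hphi)
  | kred _ ihx => exact (rtgstep_node ihx .refl).tail (Step.kred _)
  | kred' _ ihx => exact (rtgstep_node ihx .refl).tail (Step.kred' _ _)
  | sred _ _ ihx ihy => exact (rtgstep_node ihx ihy).tail (Step.sred _)
  | sred' _ _ ihx ihy => exact (rtgstep_node ihx ihy).tail (Step.sred' _ _)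
  | sred'' _ _ ihx ihy => exact (rtgstep_node ihx ihy).tail (Step.sred'' _ _ _)

theorem red_iff_rtgstep {t u : T} : Red t u ↔ Relation.ReflTransGen Step t u := by
  constructor
  · intro h
    induction h with
    | refl => exact .refl
    | tail _ h2 ih => exact ih.trans (steps_of_par h2)
  · intro h
    induction h with
    | refl => exact .refl
    | tail _ h2 ih => exact ih.tail (par_of_step h2)

end SC
namespace SC
open T Nat.Partrec Nat.Partrec.Code Denumerable

/-! ### bounded enumeration of one-step reducts, on codes -/

def c1 (t : ℕ) : ℕ := (t/2).unpair.1
def c2 (t : ℕ) : ℕ := (t/2).unpair.2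
def nodeN (x y : ℕ) : ℕ := 2 * Nat.pair x y + 1

theorem toN_node (x y : T) : toN (node x y) = nodeN (toN x) (toN y) := rfl

theorem toN_leaf (n : ℕ) : toN (leaf n) = 2 * n := rfl

theorem c1_nodeN (x y : ℕ) : c1 (nodeN x y) = x := by
  rw [c1, nodeN]
  have : (2 * Nat.pair x y + 1) / 2 = Nat.pair x y := by omega
  rw [this, Nat.unpair_pair]

theorem c2_nodeN (x y : ℕ) : c2 (nodeN x y) = y := by
  rw [c2, nodeN]
  have : (2 * Nat.pair x y + 1) / 2 = Nat.pair x y := by omega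
  rw [this, Nat.unpair_pair]

theorem nodeN_mod (x y : ℕ) : nodeN x y % 2 = 1 := by rw [nodeN]; omega

theorem ofN_odd {t : ℕ} (h : t % 2 = 1) : ofN t = node (ofN (c1 t)) (ofN (c2 t)) := by
  have h1 : t = 2 * Nat.pair (c1 t) (c2 t) + 1 := by
    rw [c1, c2, Nat.pair_unpair]; omega
  calc ofN t = ofN (2 * Nat.pair (c1 t) (c2 t) + 1) := by rw [← h1]
  _ = node (ofN (c1 t)) (ofN (c2 t)) := ofN_node _ _

theorem ofN_even {t : ℕ} (h : t % 2 = 0) : ofN t = leaf (t/2) := by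
  rw [ofN]; simp [h]

theorem ofN_nodeN (x y : ℕ) : ofN (nodeN x y) = node (ofN x) (ofN y) := ofN_node x y

def r1f (k x y : ℕ) : List ℕ :=
  if x % 2 = 0 ∧ y % 2 = 0 then
    (Nat.Partrec.Code.evaln k (ofNat Code (x/2)) (y/2)).casesOn [] (fun c => [2*c])
  else []

def r2f (k x : ℕ) : List ℕ :=
  if x % 2 = 0 then
    (List.range (k+1)).flatMap (fun a => if x / 2 = kap a then [2*a] else [])
  else []

noncomputable def r3f (x : ℕ) : List ℕ :=
  if x % 2 = 1 ∧ c1 x = 2 * k1 then [c2 x] else []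

noncomputable def r4f (k x y : ℕ) : List ℕ :=
  if x % 2 = 0 then
    (List.range (k+1)).flatMap (fun a => (List.range (k+1)).flatMap (fun b =>
      if x/2 = sig a b then [nodeN (nodeN (2*a) y) (nodeN (2*b) y)] else []))
  else []

noncomputable def r5f (k x y : ℕ) : List ℕ :=
  if x % 2 = 1 ∧ c1 x % 2 = 0 then
    (List.range (k+1)).flatMap (fun a =>
      if c1 x / 2 = sig1 a then [nodeN (nodeN (2*a) y) (nodeN (c2 x) y)] else [])
  else []

noncomputable def r6f (x y : ℕ) : List ℕ :=
  if x % 2 = 1 ∧ c1 x % 2 = 1 ∧ c1 (c1 x) = 2 * s1 then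
    [nodeN (nodeN (c2 (c1 x)) y) (nodeN (c2 x) y)]
  else []

noncomputable def root (k t : ℕ) : List ℕ :=
  if t % 2 = 1 then
    r1f k (c1 t) (c2 t) ++ r2f k (c1 t) ++ r3f (c1 t) ++ r4f k (c1 t) (c2 t) ++
      r5f k (c1 t) (c2 t) ++ r6f (c1 t) (c2 t)
  else []

noncomputable def succs (k : ℕ) (t : ℕ) : List ℕ :=
  root k t ++
    (if h : t % 2 = 1 then
      (succs k (c1 t)).map (fun x' => nodeN x' (c2 t)) ++
      (succs k (c2 t)).map (fun y' => nodeN (c1 t) y')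
    else [])
decreasing_by
  · exact lt_of_le_of_lt (Nat.unpair_left_le _) (Nat.div_lt_self (by omega) (by omega))
  · exact lt_of_le_of_lt (Nat.unpair_right_le _) (Nat.div_lt_self (by omega) (by omega))

noncomputable def succs' (k t : ℕ) : List ℕ := (List.range (k+1)).flatMap fun k' => succs k' t

noncomputable def reach (k : ℕ) : ℕ → ℕ → List ℕ
  | 0, t => [t]
  | j+1, t => (reach k j t).flatMap fun v => v :: succs' k v

/-! ### soundness -/

theorem root_sound {k t u : ℕ} (h : u ∈ root k t) : Step (ofN t) (ofN u) := by
  rw [root] at h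
  split at h
  case isFalse => cases h
  case isTrue ht =>
  rw [ofN_odd ht]
  set x := c1 t with hx
  set y := c2 t with hy
  simp only [List.mem_append] at h
  rcases h with ((((h | h) | h) | h) | h) | h
  · -- r1
    rw [r1f] at h
    split at h
    case isFalse => cases h
    case isTrue hc =>
    rcases heval : Nat.Partrec.Code.evaln k (ofNat Code (x/2)) (y/2) with _ | c
    · rw [heval] at h; cases h
    · rw [heval] at h
      simp at h
      subst h
      rw [ofN_even hc.1, ofN_even hc.2, ofN_two_mul]
      refine Step.app ?_
      exact Part.eq_some_iff.2 (evaln_sound (by rw [heval]; exact rfl))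
  · -- r2
    rw [r2f] at h
    split at h
    case isFalse => cases h
    case isTrue hc =>
    simp only [List.mem_flatMap, List.mem_range] at h
    obtain ⟨a, _, ha⟩ := h
    split at ha
    case isFalse => cases ha
    case isTrue hkap =>
    simp at ha
    subst ha
    rw [ofN_even hc, hkap, ofN_two_mul]
    exact Step.kred _
  · -- r3
    rw [r3f] at h
    split at h
    case isFalse => cases h
    case isTrue hc =>
    simp at h
    subst h
    rw [ofN_odd hc.1, hc.2, ofN_two_mul]
    exact Step.kred' _ _
  · -- r4
    rw [r4f] at h
    split at h
    case isFalse => cases h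
    case isTrue hc =>
    simp only [List.mem_flatMap, List.mem_range] at h
    obtain ⟨a, _, b, _, hb⟩ := h
    split at hb
    case isFalse => cases hb
    case isTrue hsig =>
    simp at hb
    subst hb
    rw [ofN_even hc, hsig]
    simp only [ofN_nodeN, ofN_two_mul]
    exact Step.sred _
  · -- r5
    rw [r5f] at h
    split at h
    case isFalse => cases h
    case isTrue hc =>
    simp only [List.mem_flatMap, List.mem_range] at h
    obtain ⟨a, _, ha⟩ := h
    split at ha
    case isFalse => cases ha
    case isTrue hsig1 =>
    simp at ha
    subst ha
    rw [ofN_odd hc.1, ofN_even hc.2, hsig1]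
    simp only [ofN_nodeN, ofN_two_mul]
    exact Step.sred' _ _
  · -- r6
    rw [r6f] at h
    split at h
    case isFalse => cases h
    case isTrue hc =>
    simp at h
    subst h
    rw [ofN_odd hc.1, ofN_odd hc.2.1, hc.2.2, ofN_two_mul]
    simp only [ofN_nodeN, ofN_two_mul]
    exact Step.sred'' _ _ _
  done

theorem succs_sound : ∀ t, ∀ {k u : ℕ}, u ∈ succs k t → Step (ofN t) (ofN u) := by
  intro t
  induction t using Nat.strong_induction_on with
  | _ t ih =>
    intro k u h
    rw [succs] at h
    rcases List.mem_append.1 h with h | h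
    · exact root_sound h
    · split at h
      case isFalse => cases h
      case isTrue ht =>
      have hlt1 : c1 t < t :=
        lt_of_le_of_lt (Nat.unpair_left_le _) (Nat.div_lt_self (by omega) (by omega))
      have hlt2 : c2 t < t :=
        lt_of_le_of_lt (Nat.unpair_right_le _) (Nat.div_lt_self (by omega) (by omega))
      rw [ofN_odd ht]
      rcases List.mem_append.1 h with h | h
      · simp only [List.mem_map] at h
        obtain ⟨x', hx', rfl⟩ := h
        rw [ofN_nodeN]
        exact Step.left _ (ih _ hlt1 hx')
      · simp only [List.mem_map] at h
        obtain ⟨y', hy', rfl⟩ := h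
        rw [ofN_nodeN]
        exact Step.right _ (ih _ hlt2 hy')

theorem succs'_sound {k t u : ℕ} (h : u ∈ succs' k t) : Step (ofN t) (ofN u) := by
  rw [succs'] at h
  simp only [List.mem_flatMap, List.mem_range] at h
  obtain ⟨k', _, h⟩ := h
  exact succs_sound t h

theorem reach_sound {k : ℕ} : ∀ {j t u : ℕ}, u ∈ reach k j t →
    Relation.ReflTransGen Step (ofN t) (ofN u) := by
  intro j
  induction j with
  | zero => intro t u h; simp [reach] at h; subst h; exact .refl
  | succ j ih =>
    intro t u h
    rw [reach] at h
    simp only [List.mem_flatMap] at h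
    obtain ⟨v, hv, h⟩ := h
    rcases List.mem_cons.1 h with rfl | h
    · exact ih hv
    · exact (ih hv).tail (succs'_sound h)

/-! ### completeness -/

theorem step_complete {x y : T} (h : Step x y) : ∃ k, toN y ∈ succs k (toN x) := by
  induction h with
  | @app a b c hphi =>
    obtain ⟨k, hk⟩ := evaln_complete.1 (Part.eq_some_iff.1 hphi)
    refine ⟨k, ?_⟩
    rw [succs]
    refine List.mem_append.2 (Or.inl ?_)
    rw [toN_node, toN_leaf, toN_leaf, root, if_pos (nodeN_mod _ _)]
    rw [c1_nodeN, c2_nodeN]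
    refine List.mem_append.2 (Or.inl (List.mem_append.2 (Or.inl (List.mem_append.2 (Or.inl
      (List.mem_append.2 (Or.inl (List.mem_append.2 (Or.inl ?_)))))))))
    rw [r1f, if_pos ⟨by omega, by omega⟩]
    have h1 : (2*a)/2 = a := by omega
    have h2 : (2*b)/2 = b := by omega
    rw [h1, h2]
    rw [Option.mem_def] at hk
    rw [hk]
    simp [toN_leaf]
  | @kred a y =>
    refine ⟨a, ?_⟩
    rw [succs]
    refine List.mem_append.2 (Or.inl ?_)
    rw [toN_node, toN_leaf, root, if_pos (nodeN_mod _ _), c1_nodeN, c2_nodeN]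
    refine List.mem_append.2 (Or.inl (List.mem_append.2 (Or.inl (List.mem_append.2 (Or.inl
      (List.mem_append.2 (Or.inl (List.mem_append.2 (Or.inr ?_)))))))))
    rw [r2f, if_pos (by omega)]
    simp only [List.mem_flatMap, List.mem_range]
    refine ⟨a, by omega, ?_⟩
    rw [if_pos (by omega)]
    simp [toN_leaf]
  | @kred' x y =>
    refine ⟨0, ?_⟩
    rw [succs]
    refine List.mem_append.2 (Or.inl ?_)
    rw [toN_node, toN_node, toN_leaf, root, if_pos (nodeN_mod _ _), c1_nodeN, c2_nodeN]
    refine List.mem_append.2 (Or.inl (List.mem_append.2 (Or.inl (List.mem_append.2 (Or.inl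
      (List.mem_append.2 (Or.inr ?_)))))))
    rw [r3f, if_pos ⟨nodeN_mod _ _, by rw [c1_nodeN]⟩, c2_nodeN]
    simp
  | @sred a b z =>
    refine ⟨a + b, ?_⟩
    rw [succs]
    refine List.mem_append.2 (Or.inl ?_)
    rw [toN_node, toN_leaf, root, if_pos (nodeN_mod _ _), c1_nodeN, c2_nodeN]
    refine List.mem_append.2 (Or.inl (List.mem_append.2 (Or.inl (List.mem_append.2 (Or.inr
      ?_)))))
    rw [r4f, if_pos (by omega)]
    simp only [List.mem_flatMap, List.mem_range]
    refine ⟨a, by omega, b, by omega, ?_⟩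
    rw [if_pos (by omega)]
    simp [toN_node, toN_leaf]
  | @sred' a y z =>
    refine ⟨a, ?_⟩
    rw [succs]
    refine List.mem_append.2 (Or.inl ?_)
    rw [toN_node, toN_node, toN_leaf, root, if_pos (nodeN_mod _ _), c1_nodeN, c2_nodeN]
    refine List.mem_append.2 (Or.inl (List.mem_append.2 (Or.inr ?_)))
    rw [r5f, if_pos ⟨nodeN_mod _ _, by rw [c1_nodeN]; omega⟩]
    simp only [List.mem_flatMap, List.mem_range]
    refine ⟨a, by omega, ?_⟩
    rw [c1_nodeN, c2_nodeN, if_pos (by omega)]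
    simp [toN_node, toN_leaf]
  | @sred'' x y z =>
    refine ⟨0, ?_⟩
    rw [succs]
    refine List.mem_append.2 (Or.inl ?_)
    rw [toN_node, toN_node, toN_node, toN_leaf, root, if_pos (nodeN_mod _ _), c1_nodeN, c2_nodeN]
    refine List.mem_append.2 (Or.inr ?_)
    rw [r6f, if_pos ⟨nodeN_mod _ _, by rw [c1_nodeN]; exact ⟨nodeN_mod _ _, by rw [c1_nodeN]⟩⟩]
    simp [c1_nodeN, c2_nodeN, toN_node]
  | @left x x' y _ ih =>
    obtain ⟨k, hk⟩ := ih
    refine ⟨k, ?_⟩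
    rw [toN_node, succs]
    refine List.mem_append.2 (Or.inr ?_)
    rw [dif_pos (nodeN_mod _ _), c1_nodeN, c2_nodeN]
    refine List.mem_append.2 (Or.inl ?_)
    simp only [List.mem_map]
    exact ⟨toN x', hk, rfl⟩
  | @right x y y' _ ih =>
    obtain ⟨k, hk⟩ := ih
    refine ⟨k, ?_⟩
    rw [toN_node, succs]
    refine List.mem_append.2 (Or.inr ?_)
    rw [dif_pos (nodeN_mod _ _), c1_nodeN, c2_nodeN]
    refine List.mem_append.2 (Or.inr ?_)
    simp only [List.mem_map]
    exact ⟨toN y', hk, rfl⟩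

theorem succs'_mem {k t u : ℕ} (k' : ℕ) (hk : k' ≤ k) (h : u ∈ succs k' t) : u ∈ succs' k t := by
  rw [succs']
  simp only [List.mem_flatMap, List.mem_range]
  exact ⟨k', by omega, h⟩

theorem succs'_mono {k k' t : ℕ} (hk : k ≤ k') {u : ℕ} (h : u ∈ succs' k t) :
    u ∈ succs' k' t := by
  rw [succs'] at h
  simp only [List.mem_flatMap, List.mem_range] at h
  obtain ⟨k0, hk0, h⟩ := h
  exact succs'_mem k0 (by omega) h

theorem reach_mono_k {k k' j t : ℕ} (hk : k ≤ k') : ∀ {u}, u ∈ reach k j t → u ∈ reach k' j t := by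
  induction j with
  | zero => intro u h; simpa [reach] using h
  | succ j ih =>
    intro u h
    rw [reach] at h ⊢
    simp only [List.mem_flatMap] at h ⊢
    obtain ⟨v, hv, h⟩ := h
    refine ⟨v, ih hv, ?_⟩
    rcases List.mem_cons.1 h with rfl | h
    · exact List.mem_cons_self
    · exact List.mem_cons_of_mem _ (succs'_mono hk h)

theorem reach_succ_j {k j t u : ℕ} (h : u ∈ reach k j t) : u ∈ reach k (j+1) t := by
  rw [reach]
  simp only [List.mem_flatMap]
  exact ⟨u, h, List.mem_cons_self⟩

theorem reach_mono_j {k j j' t : ℕ} (hj : j ≤ j') {u : ℕ} (h : u ∈ reach k j t) :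
    u ∈ reach k j' t := by
  induction j' with
  | zero => have : j = 0 := by omega
            subst this; exact h
  | succ j' ih =>
    rcases Nat.lt_or_ge j (j'+1) with h2 | h2
    · exact reach_succ_j (ih (by omega))
    · have : j = j' + 1 := by omega
      subst this; exact h

theorem reach_step {k j t u v : ℕ} (hu : u ∈ reach k j t) (hv : v ∈ succs' k u) :
    v ∈ reach k (j+1) t := by
  rw [reach]
  simp only [List.mem_flatMap]
  exact ⟨u, hu, List.mem_cons_of_mem _ hv⟩

theorem rtg_step_reach {x y : T} (h : Relation.ReflTransGen Step x y) :
    ∃ k, toN y ∈ reach k k (toN x) := by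
  induction h with
  | refl => exact ⟨0, by simp [reach]⟩
  | @tail u v _ hstep ih =>
    obtain ⟨k0, h0⟩ := ih
    obtain ⟨k1, h1⟩ := step_complete hstep
    refine ⟨k0 + k1 + 1, ?_⟩
    have h0' : toN u ∈ reach (k0+k1+1) (k0+k1) (toN x) :=
      reach_mono_j (by omega) (reach_mono_k (by omega) h0)
    have h1' : toN v ∈ succs' (k0+k1+1) (toN u) := succs'_mem k1 (by omega) h1
    exact reach_step h0' h1'

/-! ### the Σ⁰₁ characterization of `EN` -/

noncomputable def ChkB (z : ℕ) : Bool :=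
  let m := z.unpair.1.unpair.1
  let n := z.unpair.1.unpair.2
  let k := z.unpair.2.unpair.1
  let w := z.unpair.2.unpair.2
  decide (w ∈ reach k k m) && decide (w ∈ reach k k n)

theorem EN_iff_chk {m n : ℕ} : EN m n ↔ ∃ z, ChkB (Nat.pair (Nat.pair m n) z) = true := by
  constructor
  · rintro ⟨w, h1, h2⟩
    obtain ⟨k1, hk1⟩ := rtg_step_reach (red_iff_rtgstep.1 h1)
    obtain ⟨k2, hk2⟩ := rtg_step_reach (red_iff_rtgstep.1 h2)
    refine ⟨Nat.pair (max k1 k2) (toN w), ?_⟩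
    rw [ChkB]
    simp only [Nat.unpair_pair]
    rw [toN_ofN] at hk1 hk2
    have e1 : toN w ∈ reach (max k1 k2) (max k1 k2) m :=
      reach_mono_j (le_max_left _ _) (reach_mono_k (le_max_left _ _) hk1)
    have e2 : toN w ∈ reach (max k1 k2) (max k1 k2) n :=
      reach_mono_j (le_max_right _ _) (reach_mono_k (le_max_right _ _) hk2)
    simp [e1, e2]
  · rintro ⟨z, hz⟩
    rw [ChkB] at hz
    simp only [Nat.unpair_pair, Bool.and_eq_true, decide_eq_true_eq] at hz
    refine ⟨ofN z.unpair.2, red_iff_rtgstep.2 ?_, red_iff_rtgstep.2 ?_⟩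
    · exact reach_sound hz.1
    · exact reach_sound hz.2

end SC
namespace SC
open Nat.Partrec Nat.Partrec.Code Encodable Denumerable Primrec

theorem c1P : Primrec c1 :=
  Primrec.fst.comp (Primrec.unpair.comp (nat_div.comp .id (const 2)))

theorem c2P : Primrec c2 :=
  Primrec.snd.comp (Primrec.unpair.comp (nat_div.comp .id (const 2)))

theorem nodeNP : Primrec₂ nodeN :=
  (Primrec.succ.comp (nat_mul.comp (const 2) Primrec₂.natPair)).to₂

theorem kapP : Primrec kap :=
  Primrec.encode.comp (primrec₂_curry.comp (const Code.left) Primrec.id)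

theorem sigNP : Primrec (fun n : ℕ => encode (cSig.curry n)) :=
  Primrec.encode.comp (primrec₂_curry.comp (const cSig) Primrec.id)

theorem sig_eq (a b : ℕ) : sig a b = encode (cSig.curry (Nat.pair a b)) := rfl

theorem sig1P : Primrec sig1 :=
  Primrec.encode.comp (primrec₂_curry.comp (const cSig1) Primrec.id)

theorem r1fP : Primrec (fun p : ℕ × ℕ × ℕ => r1f p.1 p.2.1 p.2.2) := by
  have hcond : PrimrecPred fun p : ℕ × ℕ × ℕ => p.2.1 % 2 = 0 ∧ p.2.2 % 2 = 0 :=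
    ((PrimrecRel.comp Primrec.eq (nat_mod.comp (Primrec.fst.comp Primrec.snd) (const 2))
        (const 0)).and
      (PrimrecRel.comp Primrec.eq (nat_mod.comp (Primrec.snd.comp Primrec.snd) (const 2))
        (const 0)))
  have ho : Primrec fun p : ℕ × ℕ × ℕ =>
      Nat.Partrec.Code.evaln p.1 (ofNat Code (p.2.1/2)) (p.2.2/2) :=
    primrec_evaln.comp
      ((Primrec.fst.pair ((Primrec.ofNat Code).comp
          (nat_div.comp (Primrec.fst.comp Primrec.snd) (const 2)))).pair
        (nat_div.comp (Primrec.snd.comp Primrec.snd) (const 2)))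
  have hg : Primrec₂ fun (_ : ℕ × ℕ × ℕ) (c : ℕ) => [2*c] :=
    (list_cons.comp (nat_mul.comp (const 2) Primrec.snd) (const [])).to₂
  exact Primrec.ite hcond (Primrec.option_casesOn ho (const []) hg) (const [])

theorem r2fP : Primrec (fun p : ℕ × ℕ => r2f p.1 p.2) := by
  have hcond : PrimrecPred fun p : ℕ × ℕ => p.2 % 2 = 0 :=
    PrimrecRel.comp Primrec.eq (nat_mod.comp Primrec.snd (const 2)) (const 0)
  have hinner : Primrec₂ fun (p : ℕ × ℕ) (a : ℕ) => if p.2 / 2 = kap a then [2*a] else [] := by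
    have hc : PrimrecPred fun q : (ℕ × ℕ) × ℕ => q.1.2 / 2 = kap q.2 :=
      PrimrecRel.comp Primrec.eq
        (nat_div.comp (Primrec.snd.comp Primrec.fst) (const 2)) (kapP.comp Primrec.snd)
    exact (Primrec.ite hc (list_cons.comp (nat_mul.comp (const 2) Primrec.snd) (const []))
      (const [])).to₂
  exact Primrec.ite hcond
    (list_flatMap (list_range.comp (Primrec.succ.comp Primrec.fst)) hinner) (const [])

theorem r3fP : Primrec r3f := by
  have hcond : PrimrecPred fun x : ℕ => x % 2 = 1 ∧ c1 x = 2 * k1 :=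
    ((PrimrecRel.comp Primrec.eq (nat_mod.comp .id (const 2)) (const 1)).and
      (PrimrecRel.comp Primrec.eq c1P (const (2 * k1))))
  exact Primrec.ite hcond (list_cons.comp c2P (const [])) (const [])

theorem r4fP : Primrec (fun p : ℕ × ℕ × ℕ => r4f p.1 p.2.1 p.2.2) := by
  have hcond : PrimrecPred fun p : ℕ × ℕ × ℕ => p.2.1 % 2 = 0 :=
    PrimrecRel.comp Primrec.eq (nat_mod.comp (Primrec.fst.comp Primrec.snd) (const 2)) (const 0)
  have hinner2 : Primrec₂ fun (q : (ℕ × ℕ × ℕ) × ℕ) (b : ℕ) =>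
      if q.1.2.1/2 = sig q.2 b then
        [nodeN (nodeN (2*q.2) q.1.2.2) (nodeN (2*b) q.1.2.2)] else [] := by
    have hc : PrimrecPred fun r : ((ℕ × ℕ × ℕ) × ℕ) × ℕ => r.1.1.2.1/2 = sig r.1.2 r.2 := by
      have hsig : Primrec fun r : ((ℕ × ℕ × ℕ) × ℕ) × ℕ => sig r.1.2 r.2 := by
        have h0 : Primrec fun r : ((ℕ × ℕ × ℕ) × ℕ) × ℕ =>
            encode (cSig.curry (Nat.pair r.1.2 r.2)) :=
          sigNP.comp (Primrec₂.natPair.comp (Primrec.snd.comp Primrec.fst) Primrec.snd)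
        exact h0.of_eq fun r => (sig_eq _ _).symm
      exact PrimrecRel.comp Primrec.eq
        (nat_div.comp (Primrec.fst.comp (Primrec.snd.comp (Primrec.fst.comp Primrec.fst)))
          (const 2)) hsig
    have hy : Primrec fun r : ((ℕ × ℕ × ℕ) × ℕ) × ℕ => r.1.1.2.2 :=
      Primrec.snd.comp (Primrec.snd.comp (Primrec.fst.comp Primrec.fst))
    have hel : Primrec fun r : ((ℕ × ℕ × ℕ) × ℕ) × ℕ =>
        nodeN (nodeN (2*r.1.2) r.1.1.2.2) (nodeN (2*r.2) r.1.1.2.2) :=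
      nodeNP.comp
        (nodeNP.comp (nat_mul.comp (const 2) (Primrec.snd.comp Primrec.fst)) hy)
        (nodeNP.comp (nat_mul.comp (const 2) Primrec.snd) hy)
    exact (Primrec.ite hc (list_cons.comp hel (const [])) (const [])).to₂
  have hinner : Primrec₂ fun (p : ℕ × ℕ × ℕ) (a : ℕ) =>
      (List.range (p.1+1)).flatMap (fun b =>
        if p.2.1/2 = sig a b then [nodeN (nodeN (2*a) p.2.2) (nodeN (2*b) p.2.2)] else []) :=
    (list_flatMap
      (list_range.comp (Primrec.succ.comp (Primrec.fst.comp Primrec.fst))) hinner2).to₂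
  exact Primrec.ite hcond
    (list_flatMap (list_range.comp (Primrec.succ.comp Primrec.fst)) hinner) (const [])

theorem r5fP : Primrec (fun p : ℕ × ℕ × ℕ => r5f p.1 p.2.1 p.2.2) := by
  have hcond : PrimrecPred fun p : ℕ × ℕ × ℕ => p.2.1 % 2 = 1 ∧ c1 p.2.1 % 2 = 0 :=
    ((PrimrecRel.comp Primrec.eq (nat_mod.comp (Primrec.fst.comp Primrec.snd) (const 2))
        (const 1)).and
      (PrimrecRel.comp Primrec.eq
        (nat_mod.comp (c1P.comp (Primrec.fst.comp Primrec.snd)) (const 2)) (const 0)))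
  have hinner : Primrec₂ fun (p : ℕ × ℕ × ℕ) (a : ℕ) =>
      if c1 p.2.1 / 2 = sig1 a then [nodeN (nodeN (2*a) p.2.2) (nodeN (c2 p.2.1) p.2.2)]
      else [] := by
    have hc : PrimrecPred fun q : (ℕ × ℕ × ℕ) × ℕ => c1 q.1.2.1 / 2 = sig1 q.2 :=
      PrimrecRel.comp Primrec.eq
        (nat_div.comp (c1P.comp (Primrec.fst.comp (Primrec.snd.comp Primrec.fst))) (const 2))
        (sig1P.comp Primrec.snd)
    have hy : Primrec fun q : (ℕ × ℕ × ℕ) × ℕ => q.1.2.2 :=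
      Primrec.snd.comp (Primrec.snd.comp Primrec.fst)
    have hel : Primrec fun q : (ℕ × ℕ × ℕ) × ℕ =>
        nodeN (nodeN (2*q.2) q.1.2.2) (nodeN (c2 q.1.2.1) q.1.2.2) :=
      nodeNP.comp (nodeNP.comp (nat_mul.comp (const 2) Primrec.snd) hy)
        (nodeNP.comp (c2P.comp (Primrec.fst.comp (Primrec.snd.comp Primrec.fst))) hy)
    exact (Primrec.ite hc (list_cons.comp hel (const [])) (const [])).to₂
  exact Primrec.ite hcond
    (list_flatMap (list_range.comp (Primrec.succ.comp Primrec.fst)) hinner) (const [])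

theorem r6fP : Primrec (fun p : ℕ × ℕ => r6f p.1 p.2) := by
  have hcond : PrimrecPred fun p : ℕ × ℕ =>
      p.1 % 2 = 1 ∧ c1 p.1 % 2 = 1 ∧ c1 (c1 p.1) = 2 * s1 :=
    ((PrimrecRel.comp Primrec.eq (nat_mod.comp Primrec.fst (const 2)) (const 1)).and
      (((PrimrecRel.comp Primrec.eq (nat_mod.comp (c1P.comp Primrec.fst) (const 2))
          (const 1))).and
        (PrimrecRel.comp Primrec.eq (c1P.comp (c1P.comp Primrec.fst)) (const (2 * s1)))))
  have hel : Primrec fun p : ℕ × ℕ =>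
      nodeN (nodeN (c2 (c1 p.1)) p.2) (nodeN (c2 p.1) p.2) :=
    nodeNP.comp (nodeNP.comp (c2P.comp (c1P.comp Primrec.fst)) Primrec.snd)
      (nodeNP.comp (c2P.comp Primrec.fst) Primrec.snd)
  exact Primrec.ite hcond (list_cons.comp hel (const [])) (const [])

theorem rootP : Primrec₂ root := by
  have hcond : PrimrecPred fun p : ℕ × ℕ => p.2 % 2 = 1 :=
    PrimrecRel.comp Primrec.eq (nat_mod.comp Primrec.snd (const 2)) (const 1)
  have hx : Primrec fun p : ℕ × ℕ => c1 p.2 := c1P.comp Primrec.snd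
  have hy : Primrec fun p : ℕ × ℕ => c2 p.2 := c2P.comp Primrec.snd
  have h1 : Primrec fun p : ℕ × ℕ => r1f p.1 (c1 p.2) (c2 p.2) :=
    r1fP.comp (Primrec.fst.pair (hx.pair hy))
  have h2 : Primrec fun p : ℕ × ℕ => r2f p.1 (c1 p.2) := r2fP.comp (Primrec.fst.pair hx)
  have h3 : Primrec fun p : ℕ × ℕ => r3f (c1 p.2) := r3fP.comp hx
  have h4 : Primrec fun p : ℕ × ℕ => r4f p.1 (c1 p.2) (c2 p.2) :=
    r4fP.comp (Primrec.fst.pair (hx.pair hy))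
  have h5 : Primrec fun p : ℕ × ℕ => r5f p.1 (c1 p.2) (c2 p.2) :=
    r5fP.comp (Primrec.fst.pair (hx.pair hy))
  have h6 : Primrec fun p : ℕ × ℕ => r6f (c1 p.2) (c2 p.2) := r6fP.comp (hx.pair hy)
  exact (Primrec.ite hcond
    (list_append.comp (list_append.comp (list_append.comp (list_append.comp
      (list_append.comp h1 h2) h3) h4) h5) h6)
    (const [])).to₂

theorem succsP : Primrec₂ succs := by
  apply Primrec.nat_strong_rec _
    (g := fun (k : ℕ) (L : List (List ℕ)) =>
      some (root k L.length ++
        (if L.length % 2 = 1 then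
          (L.getD (c1 L.length) []).map (fun x' => nodeN x' (c2 L.length)) ++
          (L.getD (c2 L.length) []).map (fun y' => nodeN (c1 L.length) y')
        else [])))
  · -- Primrec₂ g
    have hlen : Primrec fun q : ℕ × List (List ℕ) => q.2.length := list_length.comp Primrec.snd
    have hroot : Primrec fun q : ℕ × List (List ℕ) => root q.1 q.2.length :=
      rootP.comp Primrec.fst hlen
    have hcond : PrimrecPred fun q : ℕ × List (List ℕ) => q.2.length % 2 = 1 :=
      PrimrecRel.comp Primrec.eq (nat_mod.comp hlen (const 2)) (const 1)
    have hget1 : Primrec fun q : ℕ × List (List ℕ) => q.2.getD (c1 q.2.length) [] :=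
      (list_getD []).comp Primrec.snd (c1P.comp hlen)
    have hget2 : Primrec fun q : ℕ × List (List ℕ) => q.2.getD (c2 q.2.length) [] :=
      (list_getD []).comp Primrec.snd (c2P.comp hlen)
    have hmap1 : Primrec fun q : ℕ × List (List ℕ) =>
        (q.2.getD (c1 q.2.length) []).map (fun x' => nodeN x' (c2 q.2.length)) :=
      list_map hget1 (nodeNP.comp Primrec.snd (c2P.comp (hlen.comp Primrec.fst))).to₂
    have hmap2 : Primrec fun q : ℕ × List (List ℕ) =>
        (q.2.getD (c2 q.2.length) []).map (fun y' => nodeN (c1 q.2.length) y') :=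
      list_map hget2 (nodeNP.comp (c1P.comp (hlen.comp Primrec.fst)) Primrec.snd).to₂
    exact (option_some.comp (list_append.comp hroot
      (Primrec.ite hcond (list_append.comp hmap1 hmap2) (const [])))).to₂
  · -- the recursion equation
    intro k n
    simp only [List.length_map, List.length_range]
    congr 1
    rw [succs]
    congr 1
    by_cases hn : n % 2 = 1
    · have hlt1 : c1 n < n :=
        lt_of_le_of_lt (Nat.unpair_left_le _) (Nat.div_lt_self (by omega) (by omega))
      have hlt2 : c2 n < n :=
        lt_of_le_of_lt (Nat.unpair_right_le _) (Nat.div_lt_self (by omega) (by omega))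
      have hg1 : ((List.range n).map (succs k)).getD (c1 n) [] = succs k (c1 n) := by
        rw [List.getD_eq_getElem?_getD, List.getElem?_map, List.getElem?_range hlt1]
        rfl
      have hg2 : ((List.range n).map (succs k)).getD (c2 n) [] = succs k (c2 n) := by
        rw [List.getD_eq_getElem?_getD, List.getElem?_map, List.getElem?_range hlt2]
        rfl
      rw [if_pos hn, dif_pos hn, hg1, hg2]
    · rw [if_neg hn, dif_neg hn]

theorem succs'P : Primrec₂ succs' := by
  have : Primrec fun p : ℕ × ℕ => (List.range (p.1+1)).flatMap fun k' => succs k' p.2 :=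
    list_flatMap (list_range.comp (Primrec.succ.comp Primrec.fst))
      (succsP.comp Primrec.snd (Primrec.snd.comp Primrec.fst)).to₂
  exact this.to₂

theorem reach_rec_eq (k t j : ℕ) :
    reach k j t = j.rec (motive := fun _ => List ℕ) [t]
      (fun _ IH => IH.flatMap fun v => v :: succs' k v) := by
  induction j with
  | zero => rfl
  | succ j ih => rw [reach, ih]

theorem reachP : Primrec₂ fun (p : ℕ × ℕ) (j : ℕ) => reach p.1 j p.2 := by
  have h := Primrec.nat_rec (α := ℕ × ℕ) (β := List ℕ)
    (f := fun p => [p.2]) (g := fun p q => q.2.flatMap fun v => v :: succs' p.1 v)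
    (list_cons.comp Primrec.snd (const []))
    ((list_flatMap (Primrec.snd.comp Primrec.snd)
      ((list_cons.comp Primrec.snd
        (succs'P.comp (Primrec.fst.comp (Primrec.fst.comp Primrec.fst)) Primrec.snd)).to₂)).to₂)
  exact h.of_eq fun p j => (reach_rec_eq p.1 p.2 j).symm

theorem memP : PrimrecRel fun (w : ℕ) (l : List ℕ) => w ∈ l := by
  have h : PrimrecPred fun p : ℕ × List ℕ => List.idxOf p.1 p.2 < p.2.length :=
    PrimrecRel.comp nat_lt (list_idxOf.comp Primrec.fst Primrec.snd)
      (list_length.comp Primrec.snd)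
  exact PrimrecPred.of_eq h fun p => List.idxOf_lt_length_iff

theorem ChkBP : Primrec ChkB := by
  have hm : Primrec fun z : ℕ => z.unpair.1.unpair.1 :=
    Primrec.fst.comp (Primrec.unpair.comp (Primrec.fst.comp Primrec.unpair))
  have hn : Primrec fun z : ℕ => z.unpair.1.unpair.2 :=
    Primrec.snd.comp (Primrec.unpair.comp (Primrec.fst.comp Primrec.unpair))
  have hk : Primrec fun z : ℕ => z.unpair.2.unpair.1 :=
    Primrec.fst.comp (Primrec.unpair.comp (Primrec.snd.comp Primrec.unpair))
  have hw : Primrec fun z : ℕ => z.unpair.2.unpair.2 :=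
    Primrec.snd.comp (Primrec.unpair.comp (Primrec.snd.comp Primrec.unpair))
  have hr1 : Primrec fun z : ℕ =>
      reach z.unpair.2.unpair.1 z.unpair.2.unpair.1 z.unpair.1.unpair.1 :=
    reachP.comp (hk.pair hm) hk
  have hr2 : Primrec fun z : ℕ =>
      reach z.unpair.2.unpair.1 z.unpair.2.unpair.1 z.unpair.1.unpair.2 :=
    reachP.comp (hk.pair hn) hk
  have hp1 : PrimrecPred fun z : ℕ =>
      z.unpair.2.unpair.2 ∈ reach z.unpair.2.unpair.1 z.unpair.2.unpair.1 z.unpair.1.unpair.1 :=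
    PrimrecRel.comp (R := fun w l => w ∈ l) memP hw hr1
  have hp2 : PrimrecPred fun z : ℕ =>
      z.unpair.2.unpair.2 ∈ reach z.unpair.2.unpair.1 z.unpair.2.unpair.1 z.unpair.1.unpair.2 :=
    PrimrecRel.comp (R := fun w l => w ∈ l) memP hw hr2
  have := (Primrec.dom_bool₂ (· && ·)).comp hp1.decide hp2.decide
  exact this.of_eq fun z => by rw [ChkB]

end SC

namespace SC
open Nat.Partrec Nat.Partrec.Code Encodable Denumerable Primrec

noncomputable def chkNat : ℕ → ℕ := fun w => cond (ChkB w) 0 1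

theorem chkNatP : Primrec chkNat := Primrec.cond ChkBP (const 0) (const 1)

noncomputable def FEf : ℕ →. ℕ :=
  fun a => Nat.rfind fun n => (fun m => m = 0) <$> (↑chkNat : ℕ →. ℕ) (Nat.pair a n)

theorem FEf_partrec : Nat.Partrec FEf :=
  Nat.Partrec.rfind (Partrec.nat_iff.1 chkNatP.to_comp)

theorem FEf_dom (x : ℕ) : (FEf x).Dom ↔ EN x.unpair.1 x.unpair.2 := by
  have h1 : (FEf x).Dom ↔ ∃ n, ChkB (Nat.pair x n) = true := by
    refine Iff.trans Nat.rfind_dom ?_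
    constructor
    · rintro ⟨n, hn, -⟩
      refine ⟨n, ?_⟩
      simp only [PFun.coe_val, Part.map_some, Part.mem_some_iff] at hn
      rcases hb : ChkB (Nat.pair x n) with _ | _
      · rw [chkNat, hb] at hn; simp at hn
      · rfl
    · rintro ⟨n, hn⟩
      refine ⟨n, ?_, fun {m} _ => ?_⟩
      · simp only [PFun.coe_val, Part.map_some, Part.mem_some_iff]
        rw [chkNat, hn]
        simp
      · simp only [PFun.coe_val, Part.map_some]
        trivial
  rw [h1]
  have h2 := @EN_iff_chk x.unpair.1 x.unpair.2
  rw [Nat.pair_unpair] at h2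
  exact h2.symm

noncomputable def cFE0 : Code := (exists_code.1 FEf_partrec).choose

theorem cFE0_eval : eval cFE0 = FEf := (exists_code.1 FEf_partrec).choose_spec

noncomputable def cFE2 : Code := Code.comp cFE0 Code.left

theorem cFE2_eval (z : ℕ) : eval cFE2 z = FEf z.unpair.1 := by
  have : eval cFE2 z = eval Code.left z >>= eval cFE0 := rfl
  rw [this, cFE0_eval]
  exact Part.bind_some _ FEf

noncomputable def Jf : ℕ → ℕ := fun x => encode (cFE2.curry x)

theorem JfP : Primrec Jf := Primrec.encode.comp (primrec₂_curry.comp (const cFE2) Primrec.id)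

theorem phi_Jf (x y : ℕ) : phi (Jf x) y = FEf x := by
  rw [Jf, phi_encode, eval_curry, cFE2_eval, Nat.unpair_pair]

theorem Jf_halt (x : ℕ) : (phi (Jf x) (Jf x)).Dom ↔ EN x.unpair.1 x.unpair.2 := by
  rw [phi_Jf]; exact FEf_dom x

end SC

theorem recursiveIn_of_partrec {O : ℕ →. ℕ} {f : ℕ →. ℕ} (h : Nat.Partrec f) :
    OracleRecursiveIn O f := by
  induction h with
  | zero => exact OracleRecursiveIn.zero
  | succ => exact OracleRecursiveIn.succ
  | left => exact OracleRecursiveIn.left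
  | right => exact OracleRecursiveIn.right
  | pair _ _ ih1 ih2 => exact OracleRecursiveIn.pair ih1 ih2
  | comp _ _ ih1 ih2 => exact OracleRecursiveIn.comp ih1 ih2
  | prec _ _ ih1 ih2 => exact OracleRecursiveIn.prec ih1 ih2
  | rfind _ ih => exact OracleRecursiveIn.rfind ih

theorem SC.K1comb : K1Combinators SC.k1 SC.s1 := by
  intro a b c
  refine ⟨?_, ?_, ?_, ?_, ?_⟩
  · rw [SC.phi_k1]; trivial
  · rw [SC.phi_k1]
    simp [pappN, SC.phi_kap]
  · rw [SC.phi_s1]; trivial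
  · rw [SC.phi_s1]
    simp [pappN, SC.phi_sig1]
  · rw [SC.phi_s1]
    simp [pappN, SC.phi_sig1, SC.phi_sig]

theorem strong_completion_in_halting_problem' :
    ∃ (ψ : ℕ → ℕ → ℕ) (E : ℕ → ℕ → Prop) (f : ℕ → ℕ),
      YPresentation {e : ℕ | (phi e e).Dom} ψ E ∧ StrongEmb ψ E f := by
  refine ⟨SC.psiN, SC.EN, SC.fN, ⟨?_, SC.EN_equivalence, ?_, ?_, ?_⟩, ?_⟩
  · -- psi_rec
    have hP : Primrec fun n : ℕ => 2 * Nat.pair n.unpair.1 n.unpair.2 + 1 :=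
      Primrec.succ.comp (Primrec.nat_mul.comp (Primrec.const 2)
        (Primrec₂.natPair.comp (Primrec.fst.comp Primrec.unpair)
          (Primrec.snd.comp Primrec.unpair)))
    have := recursiveIn_of_partrec
      (O := chi {e : ℕ | (phi e e).Dom}) (Partrec.nat_iff.1 hP.to_comp)
    exact this
  · -- E_rec
    have hEq : chi {n : ℕ | SC.EN n.unpair.1 n.unpair.2} =
        fun n => (↑SC.Jf : ℕ →. ℕ) n >>= chi {e : ℕ | (phi e e).Dom} := by
      funext p
      have : (↑SC.Jf : ℕ →. ℕ) p >>= chi {e : ℕ | (phi e e).Dom} =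
          chi {e : ℕ | (phi e e).Dom} (SC.Jf p) := by
        exact Part.bind_some _ _
      rw [this, chi, chi]
      have hiff : p ∈ {n : ℕ | SC.EN n.unpair.1 n.unpair.2} ↔
          SC.Jf p ∈ {e : ℕ | (phi e e).Dom} := by
        simp only [Set.mem_setOf_eq]
        exact (SC.Jf_halt p).symm
      by_cases h : p ∈ {n : ℕ | SC.EN n.unpair.1 n.unpair.2}
      · rw [if_pos h, if_pos (hiff.1 h)]
      · rw [if_neg h, if_neg (fun hc => h (hiff.2 hc))]
    rw [hEq]
    exact OracleRecursiveIn.comp OracleRecursiveIn.oracle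
      (recursiveIn_of_partrec (Partrec.nat_iff.1 SC.JfP.to_comp))
  · -- congruence
    exact fun h1 h2 => SC.EN_congr h1 h2
  · -- comb
    exact ⟨SC.fN SC.k1, SC.fN SC.s1, fun a b c => ⟨SC.EN_kred' a b, SC.EN_sred'' a b c⟩⟩
  · -- strong embedding
    refine ⟨SC.k1, SC.s1, SC.K1comb, ⟨fun n m => SC.EN_fN, fun a b c => SC.EN_app⟩,
      fun a b c => ⟨SC.EN_kred' a b, SC.EN_sred'' a b c⟩⟩

/-- There is a strong completion of `K₁` computable in the halting problem
`H = {e | φ_e(e)↓}`: an `H`-computable presentation `(ψ, E)` of a total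
combinatory algebra together with a strong embedding of `K₁` into it. -/
theorem strong_completion_in_halting_problem :
    ∃ (ψ : ℕ → ℕ → ℕ) (E : ℕ → ℕ → Prop) (f : ℕ → ℕ),
      YPresentation {e : ℕ | (phi e e).Dom} ψ E ∧ StrongEmb ψ E f := by
  exact strong_completion_in_halting_problem'
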